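/- The Korányi gauge d_K((x,y,t),(x',y',t')) = ((|x−x'|² + |y−y'|²)² + |t − t' + 2(x·y' − y·x')|²)^{1/4} defines a metric on ℍⁿ = ℝⁿ × ℝⁿ × ℝ. -/

import Mathlib

open Real Set

noncomputable section

/-- The underlying space of the Heisenberg group `ℍⁿ = ℝⁿ × ℝⁿ × ℝ`. -/
abbrev Hpt (n : ℕ) := (Fin n → ℝ) × (Fin n → ℝ) × ℝ

/-- Euclidean scalar product on `ℝⁿ`. -/
def dot {n : ℕ} (x y : Fin n → ℝ) : ℝ := ∑ i, x i * y i

/-- The Heisenberg group law. -/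
def Hmul {n : ℕ} (p q : Hpt n) : Hpt n :=
  (p.1 + q.1, p.2.1 + q.2.1, p.2.2 + q.2.2 + 2 * (dot p.2.1 q.1 - dot p.1 q.2.1))

/-- The Heisenberg group inverse `(x,y,t)⁻¹ = (−x,−y,−t)`. -/
def Hinv {n : ℕ} (p : Hpt n) : Hpt n := (-p.1, -p.2.1, -p.2.2)

/-- The homogeneous dilation `δ_s(x,y,t) = (sx, sy, s²t)`. -/
def Hdil {n : ℕ} (s : ℝ) (p : Hpt n) : Hpt n := (s • p.1, s • p.2.1, s ^ 2 * p.2.2)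

/-- The Korányi gauge metric. -/
def dK {n : ℕ} (p q : Hpt n) : ℝ :=
  ((dot (p.1 - q.1) (p.1 - q.1) + dot (p.2.1 - q.2.1) (p.2.1 - q.2.1)) ^ 2
    + (p.2.2 - q.2.2 + 2 * (dot p.1 q.2.1 - dot p.2.1 q.1)) ^ 2) ^ ((1 : ℝ) / 4)

namespace KoranyiAux

lemma dot_comm {n : ℕ} (x y : Fin n → ℝ) : dot x y = dot y x := by
  simp [dot, mul_comm]

lemma dot_self_nonneg {n : ℕ} (x : Fin n → ℝ) : 0 ≤ dot x x :=
  Finset.sum_nonneg fun i _ => mul_self_nonneg _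

lemma dot_self_eq_zero {n : ℕ} {x : Fin n → ℝ} (h : dot x x = 0) : x = 0 := by
  funext i
  have := (Finset.sum_eq_zero_iff_of_nonneg (fun i _ => mul_self_nonneg (x i))).1 h i
    (Finset.mem_univ i)
  simpa [mul_self_eq_zero] using this

lemma dot_sq_le {n : ℕ} (x y : Fin n → ℝ) : (dot x y) ^ 2 ≤ dot x x * dot y y := by
  have := Finset.sum_mul_sq_le_sq_mul_sq Finset.univ x y
  simpa [dot, sq] using this

/-- Complex-style Cauchy–Schwarz. -/
lemma keyCS {n : ℕ} (a1 b1 a2 b2 : Fin n → ℝ) :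
    (dot a1 a2 + dot b1 b2) ^ 2 + (dot b1 a2 - dot a1 b2) ^ 2
      ≤ (dot a1 a1 + dot b1 b1) * (dot a2 a2 + dot b2 b2) := by
  set S2 : ℝ := dot a2 a2 + dot b2 b2 with hS2
  set P : ℝ := dot a1 a2 + dot b1 b2 with hP
  set Q : ℝ := dot b1 a2 - dot a1 b2 with hQ
  rcases eq_or_lt_of_le (dot_self_nonneg a2) with h2 | h2
  · -- dot a2 a2 = 0, so a2 = 0
    have ha2 : a2 = 0 := dot_self_eq_zero h2.symm
    rcases eq_or_lt_of_le (dot_self_nonneg b2) with h2b | h2b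
    · have hb2 : b2 = 0 := dot_self_eq_zero h2b.symm
      simp [hP, hQ, hS2, ha2, hb2, dot]
    · -- a2 = 0, b2 may be nonzero: reduce to 1-dim complex CS with a2=0
      have e1 : (dot b1 b2)^2 ≤ dot b1 b1 * dot b2 b2 := dot_sq_le b1 b2
      have e2 : (dot a1 b2)^2 ≤ dot a1 a1 * dot b2 b2 := dot_sq_le a1 b2
      have hda : dot a1 a2 = 0 := by simp [ha2, dot]
      have hdb : dot b1 a2 = 0 := by simp [ha2, dot]
      have h22 : dot a2 a2 = 0 := by simp [ha2, dot]
      rw [hP, hQ, hS2, hda, hdb, h22]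
      nlinarith [dot_self_nonneg a1, dot_self_nonneg b1, dot_self_nonneg b2]
  ·
    have hS2pos : 0 < S2 := lt_of_lt_of_le h2 (by
      have := dot_self_nonneg b2; rw [hS2]; linarith)
    set w1 : Fin n → ℝ := fun i => S2 * a1 i - P * a2 i + Q * b2 i with hw1
    set w2 : Fin n → ℝ := fun i => S2 * b1 i - P * b2 i - Q * a2 i with hw2
    have e1 : dot w1 w1 = S2^2 * dot a1 a1 + P^2 * dot a2 a2 + Q^2 * dot b2 b2
        - 2*S2*P*dot a1 a2 + 2*S2*Q*dot a1 b2 - 2*P*Q*dot a2 b2 := by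
      simp only [dot, hw1, Finset.mul_sum, ← Finset.sum_add_distrib, ← Finset.sum_sub_distrib]
      exact Finset.sum_congr rfl fun i _ => by ring
    have e2 : dot w2 w2 = S2^2 * dot b1 b1 + P^2 * dot b2 b2 + Q^2 * dot a2 a2
        - 2*S2*P*dot b1 b2 - 2*S2*Q*dot b1 a2 + 2*P*Q*dot b2 a2 := by
      simp only [dot, hw2, Finset.mul_sum, ← Finset.sum_add_distrib, ← Finset.sum_sub_distrib]
      exact Finset.sum_congr rfl fun i _ => by ring
    have h0 : 0 ≤ dot w1 w1 + dot w2 w2 := by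
      have := dot_self_nonneg w1; have := dot_self_nonneg w2; linarith
    have hcomm : dot a2 b2 = dot b2 a2 := dot_comm a2 b2
    have key : 0 ≤ S2 * ((dot a1 a1 + dot b1 b1) * S2 - (P^2 + Q^2)) := by
      have : dot w1 w1 + dot w2 w2 = S2 * ((dot a1 a1 + dot b1 b1) * S2 - (P^2 + Q^2)) := by
        rw [e1, e2, hS2, hP, hQ]; ring_nf
        rw [hcomm]; ring
      linarith [this ▸ h0]
    nlinarith [key, hS2pos]

/-- Scalar quadrilateral lemma. -/
lemma scalar_lemma (N1 N2 S1 S2 t1 t2 P Q : ℝ) (hN1 : 0 ≤ N1) (hN2 : 0 ≤ N2)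
    (hS1 : 0 ≤ S1) (hS2 : 0 ≤ S2)
    (h1 : S1 ^ 2 + t1 ^ 2 = N1 ^ 4) (h2 : S2 ^ 2 + t2 ^ 2 = N2 ^ 4)
    (hPQ : P ^ 2 + Q ^ 2 ≤ S1 * S2) :
    (S1 + S2 + 2 * P) ^ 2 + (t1 + t2 + 2 * Q) ^ 2 ≤ (N1 + N2) ^ 4 := by
  set R : ℝ := Real.sqrt (P ^ 2 + Q ^ 2) with hR
  have hR0 : 0 ≤ R := Real.sqrt_nonneg _
  have hR2 : R ^ 2 = P ^ 2 + Q ^ 2 := Real.sq_sqrt (by positivity)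
  have hS1N : S1 ≤ N1 ^ 2 := by nlinarith [sq_nonneg t1]
  have hS2N : S2 ≤ N2 ^ 2 := by nlinarith [sq_nonneg t2]
  have hRN : R ≤ N1 * N2 := by nlinarith [mul_nonneg hN1 hN2]
  have hA : S1 * P + t1 * Q ≤ N1 ^ 2 * R := by
    nlinarith [sq_nonneg (S1 * Q - t1 * P), mul_nonneg (mul_nonneg hN1 hN1) hR0]
  have hB : S2 * P + t2 * Q ≤ N2 ^ 2 * R := by
    nlinarith [sq_nonneg (S2 * Q - t2 * P), mul_nonneg (mul_nonneg hN2 hN2) hR0]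
  have hC : S1 * S2 + t1 * t2 ≤ N1 ^ 2 * N2 ^ 2 := by
    nlinarith [sq_nonneg (S1 * t2 - S2 * t1), mul_nonneg (mul_nonneg hN1 hN1) (mul_nonneg hN2 hN2)]
  nlinarith [hA, hB, hC, hRN, hR2, mul_le_mul_of_nonneg_left hRN (mul_nonneg hN1 hN1),
    mul_le_mul_of_nonneg_left hRN (mul_nonneg hN2 hN2),
    mul_le_mul_of_nonneg_left hRN hR0, sq_nonneg (N1 - N2), mul_nonneg hN1 hN2]

lemma base_nonneg {n : ℕ} (p q : Hpt n) :
    0 ≤ (dot (p.1 - q.1) (p.1 - q.1) + dot (p.2.1 - q.2.1) (p.2.1 - q.2.1)) ^ 2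
      + (p.2.2 - q.2.2 + 2 * (dot p.1 q.2.1 - dot p.2.1 q.1)) ^ 2 := by positivity

end KoranyiAux

open KoranyiAux in
theorem koranyi_is_metric (n : ℕ) :
    (∀ p q : Hpt n, 0 ≤ dK p q) ∧
    (∀ p q : Hpt n, dK p q = 0 ↔ p = q) ∧
    (∀ p q : Hpt n, dK p q = dK q p) ∧
    (∀ p q r : Hpt n, dK p r ≤ dK p q + dK q r) := by
  refine ⟨fun p q => Real.rpow_nonneg (base_nonneg p q) _, fun p q => ?_, fun p q => ?_, ?_⟩
  · constructor
    · intro h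
      rw [dK, Real.rpow_eq_zero (base_nonneg p q) (by norm_num)] at h
      have h1 : dot (p.1 - q.1) (p.1 - q.1) + dot (p.2.1 - q.2.1) (p.2.1 - q.2.1) = 0 := by
        nlinarith [sq_nonneg (dot (p.1 - q.1) (p.1 - q.1) + dot (p.2.1 - q.2.1) (p.2.1 - q.2.1)),
          sq_nonneg (p.2.2 - q.2.2 + 2 * (dot p.1 q.2.1 - dot p.2.1 q.1))]
      have h2 : p.2.2 - q.2.2 + 2 * (dot p.1 q.2.1 - dot p.2.1 q.1) = 0 := by
        nlinarith [sq_nonneg (dot (p.1 - q.1) (p.1 - q.1) + dot (p.2.1 - q.2.1) (p.2.1 - q.2.1)),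
          sq_nonneg (p.2.2 - q.2.2 + 2 * (dot p.1 q.2.1 - dot p.2.1 q.1))]
      have hx : p.1 = q.1 := by
        have := dot_self_eq_zero (x := p.1 - q.1)
          (le_antisymm (by linarith [dot_self_nonneg (p.2.1 - q.2.1)]) (dot_self_nonneg _))
        exact sub_eq_zero.1 this
      have hy : p.2.1 = q.2.1 := by
        have := dot_self_eq_zero (x := p.2.1 - q.2.1)
          (le_antisymm (by linarith [dot_self_nonneg (p.1 - q.1)]) (dot_self_nonneg _))
        exact sub_eq_zero.1 this
      have ht : p.2.2 = q.2.2 := by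
        rw [hx, hy, dot_comm q.1 q.2.1] at h2; linarith
      exact Prod.ext hx (Prod.ext hy ht)
    · rintro rfl
      have h1 : dot (p.1 - p.1) (p.1 - p.1) = 0 := by simp [dot]
      have h2 : dot (p.2.1 - p.2.1) (p.2.1 - p.2.1) = 0 := by simp [dot]
      have h3 : dot p.1 p.2.1 - dot p.2.1 p.1 = 0 := by rw [dot_comm p.2.1 p.1]; ring
      rw [dK, h1, h2, h3]
      norm_num
  · rw [dK, dK]
    congr 1
    have e1 : dot (p.1 - q.1) (p.1 - q.1) = dot (q.1 - p.1) (q.1 - p.1) := by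
      simp only [dot, Pi.sub_apply]; exact Finset.sum_congr rfl fun i _ => by ring
    have e2 : dot (p.2.1 - q.2.1) (p.2.1 - q.2.1) = dot (q.2.1 - p.2.1) (q.2.1 - p.2.1) := by
      simp only [dot, Pi.sub_apply]; exact Finset.sum_congr rfl fun i _ => by ring
    have e3 : p.2.2 - q.2.2 + 2 * (dot p.1 q.2.1 - dot p.2.1 q.1)
        = -(q.2.2 - p.2.2 + 2 * (dot q.1 p.2.1 - dot q.2.1 p.1)) := by
      rw [dot_comm q.1 p.2.1, dot_comm q.2.1 p.1]; ring
    rw [e1, e2, e3, neg_sq]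
  · intro p q r
    set a1 := p.1 - q.1; set b1 := p.2.1 - q.2.1
    set a2 := q.1 - r.1; set b2 := q.2.1 - r.2.1
    set t1 := p.2.2 - q.2.2 + 2 * (dot p.1 q.2.1 - dot p.2.1 q.1) with ht1
    set t2 := q.2.2 - r.2.2 + 2 * (dot q.1 r.2.1 - dot q.2.1 r.1) with ht2
    set S1 := dot a1 a1 + dot b1 b1 with hS1
    set S2 := dot a2 a2 + dot b2 b2 with hS2
    set P := dot a1 a2 + dot b1 b2 with hPdef
    set Q := dot b1 a2 - dot a1 b2 with hQdef
    set N1 := dK p q with hN1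
    set N2 := dK q r with hN2
    have hN1n : 0 ≤ N1 := Real.rpow_nonneg (base_nonneg p q) _
    have hN2n : 0 ≤ N2 := Real.rpow_nonneg (base_nonneg q r) _
    have hN1e : S1 ^ 2 + t1 ^ 2 = N1 ^ 4 := by
      rw [hN1, dK]
      rw [← Real.rpow_natCast (_ ^ ((1:ℝ)/4)) 4, ← Real.rpow_mul (base_nonneg p q)]
      norm_num
      rfl
    have hN2e : S2 ^ 2 + t2 ^ 2 = N2 ^ 4 := by
      rw [hN2, dK]
      rw [← Real.rpow_natCast (_ ^ ((1:ℝ)/4)) 4, ← Real.rpow_mul (base_nonneg q r)]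
      norm_num
      rfl
    -- the base of dK p r
    have hsum1 : dot (p.1 - r.1) (p.1 - r.1) = dot a1 a1 + 2 * dot a1 a2 + dot a2 a2 := by
      simp only [dot, a1, a2, Pi.sub_apply, Finset.mul_sum, ← Finset.sum_add_distrib]
      exact Finset.sum_congr rfl fun i _ => by ring
    have hsum2 : dot (p.2.1 - r.2.1) (p.2.1 - r.2.1)
        = dot b1 b1 + 2 * dot b1 b2 + dot b2 b2 := by
      simp only [dot, b1, b2, Pi.sub_apply, Finset.mul_sum, ← Finset.sum_add_distrib]
      exact Finset.sum_congr rfl fun i _ => by ring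
    have hT : p.2.2 - r.2.2 + 2 * (dot p.1 r.2.1 - dot p.2.1 r.1) = t1 + t2 + 2 * Q := by
      have key : dot b1 a2 - dot a1 b2
          = (dot p.1 r.2.1 - dot p.2.1 r.1) - (dot p.1 q.2.1 - dot p.2.1 q.1)
            - (dot q.1 r.2.1 - dot q.2.1 r.1) := by
        simp only [dot, a1, a2, b1, b2, Pi.sub_apply, ← Finset.sum_sub_distrib]
        exact Finset.sum_congr rfl fun i _ => by ring
      rw [hQdef, key, ht1, ht2]; ring
    have hCS : P ^ 2 + Q ^ 2 ≤ S1 * S2 := keyCS a1 b1 a2 b2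
    have hS1n : 0 ≤ S1 := add_nonneg (dot_self_nonneg _) (dot_self_nonneg _)
    have hS2n : 0 ≤ S2 := add_nonneg (dot_self_nonneg _) (dot_self_nonneg _)
    have main : (S1 + S2 + 2 * P) ^ 2 + (t1 + t2 + 2 * Q) ^ 2 ≤ (N1 + N2) ^ 4 :=
      scalar_lemma N1 N2 S1 S2 t1 t2 P Q hN1n hN2n hS1n hS2n hN1e hN2e hCS
    have hbase : dK p r = ((S1 + S2 + 2 * P) ^ 2 + (t1 + t2 + 2 * Q) ^ 2) ^ ((1:ℝ)/4) := by
      rw [dK, hsum1, hsum2, hT, hS1, hS2, hPdef]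
      congr 1
      ring
    rw [hbase]
    calc ((S1 + S2 + 2 * P) ^ 2 + (t1 + t2 + 2 * Q) ^ 2) ^ ((1:ℝ)/4)
        ≤ ((N1 + N2) ^ 4) ^ ((1:ℝ)/4) :=
          Real.rpow_le_rpow (by positivity) main (by norm_num)
      _ = N1 + N2 := by
          rw [← Real.rpow_natCast (N1 + N2) 4, ← Real.rpow_mul (by linarith)]
          norm_num
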